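/- There exists an absolute constant C > 0 such that, under the setup below, | ∫_{−∞}^{∞} ∫_{X^{A₄}}^{∞} F₀(x + u)·(sin(αu)/u)²·e^{−2iαu}·|R(x)|²·Φ(x/Y₂) du dx | ≤ C·X^{−A₄}·( Σ_{n=1}^{N} a_n )·I₂. -/

import Mathlib

open Real Filter Finset MeasureTheory

/-- The resonator `R(x) = ∏_{λ ∈ 𝓜} (1 − e^{−λ/(2α)} e^{iλx})⁻¹`. -/
noncomputable def resonator (α : ℝ) (𝓜 : Finset ℝ) (x : ℝ) : ℂ :=
  ∏ l ∈ 𝓜, (1 - (Real.exp (-l / (2 * α)) : ℂ) * Complex.exp ((l * x : ℝ) * Complex.I))⁻¹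

lemma resonator_exp_lt_one {α l : ℝ} (hl : 0 < l) (hα : 0 < α) :
    Real.exp (-l / (2 * α)) < 1 := by
  rw [Real.exp_lt_one_iff, neg_div]
  have : 0 < l / (2 * α) := by positivity
  linarith

lemma resonator_factor_ne {α l : ℝ} (hl : 0 < l) (hα : 0 < α) (x : ℝ) :
    (1 : ℂ) - (Real.exp (-l / (2 * α)) : ℂ) * Complex.exp ((l * x : ℝ) * Complex.I) ≠ 0 := by
  intro h
  have h2 : (Real.exp (-l / (2 * α)) : ℂ) * Complex.exp ((l * x : ℝ) * Complex.I) = 1 := by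
    linear_combination -h
  have h1 : ‖(Real.exp (-l / (2 * α)) : ℂ)
      * Complex.exp ((l * x : ℝ) * Complex.I)‖ = Real.exp (-l / (2 * α)) := by
    rw [norm_mul, Complex.norm_real, Complex.norm_exp_ofReal_mul_I,
      Real.norm_of_nonneg (Real.exp_pos _).le, mul_one]
  rw [h2, norm_one] at h1
  have := resonator_exp_lt_one hl hα
  linarith

lemma resonator_abs_le {α : ℝ} (hα : 0 < α) {𝓜 : Finset ℝ} (h : ∀ l ∈ 𝓜, 0 < l) (x : ℝ) :
    ‖resonator α 𝓜 x‖ ≤ ∏ l ∈ 𝓜, (1 - Real.exp (-l / (2 * α)))⁻¹ := by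
  rw [resonator, norm_prod]
  refine Finset.prod_le_prod (fun l _ => norm_nonneg _) (fun l hl => ?_)
  have hlt := resonator_exp_lt_one (h l hl) hα
  rw [norm_inv]
  refine inv_anti₀ (by linarith) ?_
  set c : ℂ := (Real.exp (-l / (2 * α)) : ℂ) * Complex.exp ((l * x : ℝ) * Complex.I) with hc
  have habs : ‖c‖ = Real.exp (-l / (2 * α)) := by
    rw [hc, norm_mul, Complex.norm_real, Complex.norm_exp_ofReal_mul_I,
      Real.norm_of_nonneg (Real.exp_pos _).le, mul_one]
  calc 1 - Real.exp (-l / (2 * α)) = ‖(1 : ℂ)‖ - ‖c‖ := by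
        rw [norm_one, habs]
    _ ≤ ‖1 - c‖ := norm_sub_norm_le _ _
    _ = ‖1 - c‖ := rfl

lemma resonator_continuous {α : ℝ} (hα : 0 < α) {𝓜 : Finset ℝ} (h : ∀ l ∈ 𝓜, 0 < l) :
    Continuous (resonator α 𝓜) := by
  unfold resonator
  refine continuous_finset_prod _ fun l hl =>
    Continuous.inv₀ ?_ (fun x => resonator_factor_ne (h l hl) hα x)
  fun_prop

theorem convolution_tail_bound :
    ∃ C > 0, ∀ A₁ A₂ A₃ A₄ C₁ X α : ℝ,
      0 < A₄ → A₄ < A₃ → A₃ < A₂ → A₂ < A₁ → 0 < C₁ → C₁ < 2 → 3 ≤ X → 0 < α →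
      ∀ lam a : ℕ → ℝ,
      (∀ n ∈ Finset.Icc 1 ⌊X ^ A₁⌋₊, 0 < lam n) →
      (∀ n ∈ Finset.Icc 1 ⌊X ^ A₁⌋₊, 0 ≤ a n) →
      (∀ m ∈ Finset.Icc 1 ⌊X ^ A₁⌋₊, ∀ n ∈ Finset.Icc 1 ⌊X ^ A₁⌋₊, lam m = lam n → m = n) →
      ∀ 𝓜 : Finset ℝ,
      (∀ t ∈ 𝓜, (∃ n ∈ Finset.Icc 1 ⌊X ^ A₁⌋₊, lam n = t) ∧ C₁ * α ≤ t ∧ t ≤ 2 * α) →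
      LinearIndependent ℚ (fun t : {y : ℝ // y ∈ 𝓜} => (t : ℝ)) →
      ‖(∫ x : ℝ, ∫ u in Set.Ioi (X ^ A₄),
          (((∑ n ∈ Finset.Icc 1 ⌊X ^ A₁⌋₊, a n * Real.cos (lam n * (x + u))) : ℝ) : ℂ)
            * (((Real.sin (α * u) / u) ^ 2 : ℝ) : ℂ)
            * Complex.exp (-(2 * α * u : ℝ) * Complex.I)
            * ((‖resonator α 𝓜 x‖ ^ 2 : ℝ) : ℂ)
            * ((Real.exp (-(x / X ^ A₂) ^ 2 / 2) : ℝ) : ℂ))‖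
        ≤ C * X ^ (-A₄) * (∑ n ∈ Finset.Icc 1 ⌊X ^ A₁⌋₊, a n) *
            ∫ x : ℝ, ‖resonator α 𝓜 x‖ ^ 2 * Real.exp (-(x / X ^ A₂) ^ 2 / 2) := by
  refine ⟨1, one_pos, ?_⟩
  intro A₁ A₂ A₃ A₄ C₁ X α hA₄ h43 h32 h21 hC₁ hC₁2 hX hα lam a hlam ha hinj 𝓜 h𝓜 hli
  have hX0 : (0 : ℝ) < X := by linarith
  set N := ⌊X ^ A₁⌋₊ with hN
  set S := ∑ n ∈ Finset.Icc 1 N, a n with hS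
  have hS0 : 0 ≤ S := Finset.sum_nonneg ha
  set T := X ^ A₄ with hT
  have hT0 : 0 < T := Real.rpow_pos_of_pos hX0 _
  set Y := X ^ A₂ with hY
  have hY0 : 0 < Y := Real.rpow_pos_of_pos hX0 _
  have h𝓜pos : ∀ l ∈ 𝓜, 0 < l := fun l hl => lt_of_lt_of_le (by positivity) (h𝓜 l hl).2.1
  -- g : the weight
  set g : ℝ → ℝ := fun x => ‖resonator α 𝓜 x‖ ^ 2 * Real.exp (-(x / Y) ^ 2 / 2)
    with hg
  have hg0 : ∀ x, 0 ≤ g x := fun x => by positivity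
  -- integrability of g
  have hgauss : Integrable (fun x : ℝ => Real.exp (-(x / Y) ^ 2 / 2)) := by
    have heq : (fun x : ℝ => Real.exp (-(x / Y) ^ 2 / 2))
        = fun x : ℝ => Real.exp (-(1 / (2 * Y ^ 2)) * x ^ 2) := by
      funext x; congr 1; field_simp
    rw [heq]
    exact integrable_exp_neg_mul_sq (by positivity)
  set M : ℝ := ∏ l ∈ 𝓜, (1 - Real.exp (-l / (2 * α)))⁻¹ with hM
  have hM0 : 0 ≤ M := Finset.prod_nonneg fun l hl => by
    have h1 := resonator_exp_lt_one (h𝓜pos l hl) hα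
    have h2 : (0:ℝ) < 1 - Real.exp (-l / (2 * α)) := by linarith
    positivity
  have hRle : ∀ x, ‖resonator α 𝓜 x‖ ≤ M := fun x =>
    resonator_abs_le hα h𝓜pos x
  have hgcont : Continuous g := by
    have h1 : Continuous fun x => ‖resonator α 𝓜 x‖ :=
      continuous_norm.comp (resonator_continuous hα h𝓜pos)
    fun_prop
  have hgint : Integrable g := by
    refine ((hgauss.const_mul (M ^ 2)).mono' hgcont.aestronglyMeasurable
      (ae_of_all _ fun x => ?_))
    have h1 : ‖resonator α 𝓜 x‖ ^ 2 ≤ M ^ 2 :=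
      pow_le_pow_left₀ (norm_nonneg _) (hRle x) 2
    have h2 : (0:ℝ) < Real.exp (-(x / Y) ^ 2 / 2) := Real.exp_pos _
    rw [Real.norm_eq_abs, abs_of_nonneg (hg0 x)]
    exact mul_le_mul_of_nonneg_right h1 h2.le
  have hgnn : 0 ≤ ∫ x, g x := integral_nonneg hg0
  -- pointwise bound on the inner integral
  have hB : ∀ x : ℝ, ‖∫ u in Set.Ioi T,
      (((∑ n ∈ Finset.Icc 1 N, a n * Real.cos (lam n * (x + u))) : ℝ) : ℂ)
        * (((Real.sin (α * u) / u) ^ 2 : ℝ) : ℂ)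
        * Complex.exp (-(2 * α * u : ℝ) * Complex.I)
        * ((‖resonator α 𝓜 x‖ ^ 2 : ℝ) : ℂ)
        * ((Real.exp (-(x / Y) ^ 2 / 2) : ℝ) : ℂ)‖ ≤ T⁻¹ * S * g x := by
    intro x
    have hbddint : IntegrableOn (fun u : ℝ => S * g x * u ^ (-2 : ℝ)) (Set.Ioi T) :=
      (integrableOn_Ioi_rpow_of_lt (by norm_num) hT0).const_mul _
    calc ‖∫ u in Set.Ioi T,
        (((∑ n ∈ Finset.Icc 1 N, a n * Real.cos (lam n * (x + u))) : ℝ) : ℂ)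
          * (((Real.sin (α * u) / u) ^ 2 : ℝ) : ℂ)
          * Complex.exp (-(2 * α * u : ℝ) * Complex.I)
          * ((‖resonator α 𝓜 x‖ ^ 2 : ℝ) : ℂ)
          * ((Real.exp (-(x / Y) ^ 2 / 2) : ℝ) : ℂ)‖
        ≤ ∫ u in Set.Ioi T, ‖(((∑ n ∈ Finset.Icc 1 N, a n * Real.cos (lam n * (x + u))) : ℝ) : ℂ)
          * (((Real.sin (α * u) / u) ^ 2 : ℝ) : ℂ)
          * Complex.exp (-(2 * α * u : ℝ) * Complex.I)
          * ((‖resonator α 𝓜 x‖ ^ 2 : ℝ) : ℂ)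
          * ((Real.exp (-(x / Y) ^ 2 / 2) : ℝ) : ℂ)‖ := norm_integral_le_integral_norm _
      _ ≤ ∫ u in Set.Ioi T, S * g x * u ^ (-2 : ℝ) := by
          refine integral_mono_of_nonneg (ae_of_all _ fun u => norm_nonneg _) hbddint ?_
          filter_upwards [MeasureTheory.ae_restrict_mem measurableSet_Ioi] with u hu
          have hu0 : 0 < u := lt_trans hT0 hu
          have hrw : u ^ (-2 : ℝ) = (u ^ 2)⁻¹ := by
            rw [show (-2 : ℝ) = -(2:ℕ) by norm_num, Real.rpow_neg hu0.le,
              Real.rpow_natCast]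
          simp only [norm_mul, Complex.norm_real, Real.norm_eq_abs]
          have hexp1 : ‖Complex.exp (-(2 * α * u : ℝ) * Complex.I)‖ = 1 := by
            rw [show ((-(2 * α * u : ℝ)) : ℂ) = ((-(2 * α * u) : ℝ) : ℂ) by push_cast; ring]
            rw [Complex.norm_exp_ofReal_mul_I]
          rw [hexp1, mul_one]
          have hF : |∑ n ∈ Finset.Icc 1 N, a n * Real.cos (lam n * (x + u))| ≤ S := by
            refine (Finset.abs_sum_le_sum_abs _ _).trans (Finset.sum_le_sum fun n hn => ?_)
            rw [abs_mul, abs_of_nonneg (ha n hn)]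
            calc a n * |Real.cos (lam n * (x + u))| ≤ a n * 1 :=
                  mul_le_mul_of_nonneg_left (Real.abs_cos_le_one _) (ha n hn)
              _ = a n := mul_one _
          have hs2 : |(Real.sin (α * u) / u) ^ 2| ≤ u ^ (-2 : ℝ) := by
            rw [abs_of_nonneg (sq_nonneg _), hrw, div_pow]
            refine div_le_div_of_nonneg_right ?_ (by positivity) |>.trans_eq
              (by rw [one_div])
            · nlinarith [Real.neg_one_le_sin (α * u), Real.sin_le_one (α * u)]
          have hr2 : |‖resonator α 𝓜 x‖ ^ 2| = ‖resonator α 𝓜 x‖ ^ 2 :=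
            abs_of_nonneg (sq_nonneg _)
          have hφ : |Real.exp (-(x / Y) ^ 2 / 2)| = Real.exp (-(x / Y) ^ 2 / 2) :=
            abs_of_nonneg (Real.exp_pos _).le
          rw [hr2, hφ]
          have key : |∑ n ∈ Finset.Icc 1 N, a n * Real.cos (lam n * (x + u))|
              * |(Real.sin (α * u) / u) ^ 2| ≤ S * u ^ (-2 : ℝ) :=
            mul_le_mul hF hs2 (abs_nonneg _) hS0
          calc |∑ n ∈ Finset.Icc 1 N, a n * Real.cos (lam n * (x + u))|
              * |(Real.sin (α * u) / u) ^ 2|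
              * (‖resonator α 𝓜 x‖ ^ 2)
              * Real.exp (-(x / Y) ^ 2 / 2)
              ≤ S * u ^ (-2 : ℝ) * (‖resonator α 𝓜 x‖ ^ 2)
                * Real.exp (-(x / Y) ^ 2 / 2) := by
                refine mul_le_mul_of_nonneg_right
                  (mul_le_mul_of_nonneg_right key (sq_nonneg _)) (Real.exp_pos _).le
            _ = S * g x * u ^ (-2 : ℝ) := by rw [hg]; ring
      _ = S * g x * ∫ u in Set.Ioi T, u ^ (-2 : ℝ) := by
          rw [MeasureTheory.integral_const_mul]
      _ = S * g x * T⁻¹ := by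
          rw [integral_Ioi_rpow_of_lt (by norm_num) hT0,
            show (-2:ℝ) + 1 = -1 by norm_num, Real.rpow_neg_one]
          ring
      _ = T⁻¹ * S * g x := by ring
  -- main chain
  have main : ‖∫ x : ℝ, ∫ u in Set.Ioi T,
      (((∑ n ∈ Finset.Icc 1 N, a n * Real.cos (lam n * (x + u))) : ℝ) : ℂ)
        * (((Real.sin (α * u) / u) ^ 2 : ℝ) : ℂ)
        * Complex.exp (-(2 * α * u : ℝ) * Complex.I)
        * ((‖resonator α 𝓜 x‖ ^ 2 : ℝ) : ℂ)
        * ((Real.exp (-(x / Y) ^ 2 / 2) : ℝ) : ℂ)‖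
      ≤ T⁻¹ * S * ∫ x, g x := by
    calc ‖∫ x : ℝ, ∫ u in Set.Ioi T,
        (((∑ n ∈ Finset.Icc 1 N, a n * Real.cos (lam n * (x + u))) : ℝ) : ℂ)
          * (((Real.sin (α * u) / u) ^ 2 : ℝ) : ℂ)
          * Complex.exp (-(2 * α * u : ℝ) * Complex.I)
          * ((‖resonator α 𝓜 x‖ ^ 2 : ℝ) : ℂ)
          * ((Real.exp (-(x / Y) ^ 2 / 2) : ℝ) : ℂ)‖
        ≤ ∫ x : ℝ, ‖∫ u in Set.Ioi T,
          (((∑ n ∈ Finset.Icc 1 N, a n * Real.cos (lam n * (x + u))) : ℝ) : ℂ)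
          * (((Real.sin (α * u) / u) ^ 2 : ℝ) : ℂ)
          * Complex.exp (-(2 * α * u : ℝ) * Complex.I)
          * ((‖resonator α 𝓜 x‖ ^ 2 : ℝ) : ℂ)
          * ((Real.exp (-(x / Y) ^ 2 / 2) : ℝ) : ℂ)‖ := norm_integral_le_integral_norm _
      _ ≤ ∫ x : ℝ, T⁻¹ * S * g x :=
          integral_mono_of_nonneg (ae_of_all _ fun x => norm_nonneg _)
            (hgint.const_mul _) (ae_of_all _ hB)
      _ = T⁻¹ * S * ∫ x, g x := MeasureTheory.integral_const_mul _ _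
  have hTrw : T⁻¹ = X ^ (-A₄) := by
    rw [hT, Real.rpow_neg hX0.le]
  calc ‖∫ x : ℝ, ∫ u in Set.Ioi T,
      (((∑ n ∈ Finset.Icc 1 N, a n * Real.cos (lam n * (x + u))) : ℝ) : ℂ)
        * (((Real.sin (α * u) / u) ^ 2 : ℝ) : ℂ)
        * Complex.exp (-(2 * α * u : ℝ) * Complex.I)
        * ((‖resonator α 𝓜 x‖ ^ 2 : ℝ) : ℂ)
        * ((Real.exp (-(x / Y) ^ 2 / 2) : ℝ) : ℂ)‖
      ≤ T⁻¹ * S * ∫ x, g x := main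
    _ = 1 * X ^ (-A₄) * S * ∫ x, g x := by rw [hTrw]; ring
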